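/- Let H be a finite multigraph (loops allowed, no multiple edges) such that |N_H(h) ∩ N_H(h')| ≤ 1 for all distinct vertices h, h' of H. Let I = (G, L) be a reduced list H-colouring instance and let v be a vertex of G of degree d(v) in G. For h ∈ V(H), let C_h = {v' ∈ N_G(v) : L_{v'} ⊆ N_H(h)}. Then there is at most one h ∈ L_v for which |C_h| > d(v)/2. -/
import Mathlib


/-- Let `H` be a finite multigraph (loops allowed, no multiple
edges; encoded by its symmetric adjacency relation `HAdj`) such that
`|N_H(h) ∩ N_H(h')| ≤ 1` for all distinct vertices `h, h'` of `H`. Let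
`(G, L)` be a reduced list `H`-colouring instance and `v` a vertex of `G` of
degree `d(v)`. For `h ∈ V(H)` let `C h = {v' ∈ N_G(v) : L v' ⊆ N_H(h)}`.
Then there is at most one `h ∈ L v` with `|C h| > d(v)/2`. -/
theorem at_most_one_large_colour {V VH : Type} [Fintype V] [DecidableEq V]
    [Fintype VH] [DecidableEq VH]
    (G : SimpleGraph V) [DecidableRel G.Adj]
    (HAdj : VH → VH → Prop) [DecidableRel HAdj] (hsym : Symmetric HAdj)
    (hH : ∀ h h' : VH, h ≠ h' → ({x : VH | HAdj h x ∧ HAdj h' x} : Set VH).ncard ≤ 1)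
    (L : V → Finset VH) (hred : ∀ u : V, 2 ≤ (L u).card)
    (v : V) (C : VH → Finset V)
    (hC : ∀ h : VH, C h = (G.neighborFinset v).filter (fun v' => ∀ x ∈ L v', HAdj h x)) :
    ∀ h ∈ L v, ∀ h' ∈ L v,
      (G.degree v : ℝ) / 2 < ((C h).card : ℝ) →
      (G.degree v : ℝ) / 2 < ((C h').card : ℝ) → h = h' := by
  intro h _ h' _ hbig hbig'
  by_contra hne
  -- both C h, C h' ⊆ neighborFinset v
  have hsub : C h ⊆ G.neighborFinset v := by rw [hC]; exact Finset.filter_subset _ _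
  have hsub' : C h' ⊆ G.neighborFinset v := by rw [hC]; exact Finset.filter_subset _ _
  have hunion : (C h ∪ C h').card ≤ G.degree v := by
    have := Finset.card_le_card (Finset.union_subset hsub hsub')
    simpa [SimpleGraph.card_neighborFinset_eq_degree] using this
  have hsum : (G.degree v : ℝ) < (C h).card + (C h').card := by linarith
  have hinter : (C h ∩ C h').Nonempty := by
    rw [← Finset.card_pos]
    by_contra hz
    push_neg at hz
    interval_cases hcard : (C h ∩ C h').card
    have := Finset.card_union_add_card_inter (C h) (C h')
    rw [hcard, add_zero] at this
    have : (C h).card + (C h').card ≤ G.degree v := this ▸ hunion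
    have : ((C h).card + (C h').card : ℝ) ≤ (G.degree v : ℝ) := by exact_mod_cast this
    push_cast at this
    linarith
  obtain ⟨v', hv'⟩ := hinter
  rw [Finset.mem_inter, hC, hC, Finset.mem_filter, Finset.mem_filter] at hv'
  have hLsub : (L v' : Set VH) ⊆ {x : VH | HAdj h x ∧ HAdj h' x} := by
    intro x hx
    exact ⟨hv'.1.2 x hx, hv'.2.2 x hx⟩
  have h2 : 2 ≤ ({x : VH | HAdj h x ∧ HAdj h' x} : Set VH).ncard := by
    calc 2 ≤ (L v').card := hred v'
    _ = ((L v' : Set VH)).ncard := (Set.ncard_coe_finset _).symm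
    _ ≤ _ := Set.ncard_le_ncard hLsub (Set.toFinite _)
  have := hH h h' hne
  omega
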